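/- Fix k ≥ 3 and let q = p^ℓ with p ≥ k prime. If A ⊆ F_q^n contains no k distinct vectors x_1,...,x_k such that ⟨x_i - x_j, x_j - x_ℓ⟩ = 0 for all triples of distinct indices i, j, ℓ, then |A| = O(n^{(k+1)(q-1)}) as n → ∞ (with implied constant depending on k and q). -/

import Mathlib

open Finset
open scoped Pointwise

section aux
variable {F : Type*} [Field F] {n : ℕ}

private def mon (F : Type*) [Field F] (n D : ℕ) (v : Fin D → Option (Fin n)) :
    (Fin n → F) → F := fun y => ∏ i, ((v i).elim 1 y)

private def MonSpan (F : Type*) [Field F] (n D : ℕ) :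
    Submodule F ((Fin n → F) → F) :=
  Submodule.span F (Set.range (mon F n D))

private lemma one_mem_monSpan (D : ℕ) : (1 : (Fin n → F) → F) ∈ MonSpan F n D := by
  have h : mon F n D (fun _ => none) = 1 := by
    funext y; simp [mon]
  exact h ▸ Submodule.subset_span ⟨_, rfl⟩

private lemma mul_mem_monSpan {a b : ℕ} {f g : (Fin n → F) → F}
    (hf : f ∈ MonSpan F n a) (hg : g ∈ MonSpan F n b) :
    f * g ∈ MonSpan F n (a + b) := by
  have h : (Set.range (mon F n a)) * (Set.range (mon F n b)) ⊆ Set.range (mon F n (a + b)) := by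
    rintro x ⟨x1, ⟨v, rfl⟩, x2, ⟨w, rfl⟩, rfl⟩
    refine ⟨Fin.append v w, ?_⟩
    funext y
    simp [mon, Fin.prod_univ_add, Fin.append_left, Fin.append_right, mul_comm]
  have h2 := Submodule.mul_mem_mul hf hg
  rw [MonSpan, MonSpan, Submodule.span_mul_span] at h2
  exact Submodule.span_mono h h2

private lemma monSpan_mono {a b : ℕ} (hab : a ≤ b) : MonSpan F n a ≤ MonSpan F n b := by
  intro f hf
  have h := mul_mem_monSpan hf (one_mem_monSpan (F := F) (n := n) (b - a))
  rwa [mul_one, Nat.add_sub_cancel' hab] at h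

private lemma pow_mem_monSpan {f : (Fin n → F) → F} (hf : f ∈ MonSpan F n 1) (j : ℕ) :
    f ^ j ∈ MonSpan F n j := by
  induction j with
  | zero => simpa [pow_zero] using one_mem_monSpan (F := F) (n := n) 0
  | succ m ih =>
      have h := mul_mem_monSpan ih hf
      rwa [← pow_succ] at h

private lemma ip_sub_mem_monSpan (z : Fin n → F) (c : F) :
    (fun y : Fin n → F => (∑ s, z s * y s) - c) ∈ MonSpan F n 1 := by
  have h1 : ∀ s : Fin n, (fun y : Fin n → F => y s) ∈ MonSpan F n 1 := by
    intro s
    have h : mon F n 1 (fun _ => some s) = fun y => y s := by funext y; simp [mon]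
    exact h ▸ Submodule.subset_span ⟨_, rfl⟩
  have h2 : (fun y : Fin n → F => ∑ s, z s * y s) ∈ MonSpan F n 1 := by
    have heq : (fun y : Fin n → F => ∑ s, z s * y s)
        = ∑ s : Fin n, z s • (fun y : Fin n → F => y s) := by
      funext y; simp
    rw [heq]
    exact Submodule.sum_mem _ fun s _ => Submodule.smul_mem _ _ (h1 s)
  have h3 : (fun _ : Fin n → F => c) ∈ MonSpan F n 1 := by
    have h := Submodule.smul_mem _ c (one_mem_monSpan (F := F) (n := n) 1)
    convert h using 1
    funext y; simp
  exact Submodule.sub_mem _ h2 h3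

private lemma factor_mem_monSpan (z : Fin n → F) (c : F) (e : ℕ) :
    (fun y : Fin n → F => 1 - ((∑ s, z s * y s) - c) ^ e) ∈ MonSpan F n e := by
  have h1 := pow_mem_monSpan (ip_sub_mem_monSpan z c) e
  have h2 : (fun y : Fin n → F => ((∑ s, z s * y s) - c) ^ e)
      = (fun y : Fin n → F => (∑ s, z s * y s) - c) ^ e := by
    funext y; simp
  have h3 : (fun y : Fin n → F => 1 - ((∑ s, z s * y s) - c) ^ e)
      = (1 : (Fin n → F) → F) - (fun y : Fin n → F => (∑ s, z s * y s) - c) ^ e := by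
    funext y; simp
  rw [h3]
  exact Submodule.sub_mem _ (one_mem_monSpan e) h1

private lemma prod_mem_monSpan (C : Finset (Fin n → F)) (c : F) (e : ℕ) :
    (fun y : Fin n → F => ∏ z ∈ C, (1 - ((∑ s, z s * y s) - c) ^ e))
      ∈ MonSpan F n (C.card * e) := by
  classical
  induction C using Finset.induction with
  | empty =>
    simp only [Finset.prod_empty, Finset.card_empty, zero_mul]
    exact one_mem_monSpan (F := F) (n := n) 0
  | insert _ _ ha ih =>
      rename_i a C
      have heq : (fun y : Fin n → F => ∏ z ∈ insert a C, (1 - ((∑ s, z s * y s) - c) ^ e))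
          = (fun y : Fin n → F => 1 - ((∑ s, a s * y s) - c) ^ e)
            * (fun y : Fin n → F => ∏ z ∈ C, (1 - ((∑ s, z s * y s) - c) ^ e)) := by
        funext y; simp [Finset.prod_insert ha]
      rw [heq, Finset.card_insert_of_notMem ha]
      have h := mul_mem_monSpan (factor_mem_monSpan a c e) ih
      have : e + C.card * e = (C.card + 1) * e := by ring
      rwa [this] at h

private lemma card_bound_monSpan {D : ℕ} {b : Set ((Fin n → F) → F)} (hb : b.Finite)
    (hsub : b ⊆ (MonSpan F n D : Set ((Fin n → F) → F)))
    (hind : LinearIndependent F ((↑) : b → ((Fin n → F) → F))) :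
    hb.toFinset.card ≤ (n + 1) ^ D := by
  classical
  haveI := hb.fintype
  haveI : Fintype (Set.range (mon F n D)) := Set.fintypeRange _
  have hv : LinearIndependent F
      (fun x : b => (⟨(x : (Fin n → F) → F), hsub x.2⟩ : MonSpan F n D)) := by
    apply LinearIndependent.of_comp (MonSpan F n D).subtype
    exact hind
  have h1 : ((Fintype.card b : ℕ) : Cardinal) ≤ Module.rank F (MonSpan F n D) := by
    rw [← Cardinal.mk_fintype]; exact hv.cardinal_le_rank
  have h2 : Module.rank F (MonSpan F n D)
      ≤ ((Fintype.card (Set.range (mon F n D)) : ℕ) : Cardinal) := by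
    rw [← Cardinal.mk_fintype]; exact rank_span_le _
  have h3 : Fintype.card b ≤ Fintype.card (Set.range (mon F n D)) := by
    exact_mod_cast h1.trans h2
  have h4 : Fintype.card (Set.range (mon F n D)) ≤ (n + 1) ^ D := by
    have := Fintype.card_range_le (mon F n D)
    simpa using this
  rw [hb.card_toFinset]
  exact h3.trans h4

end aux

open scoped Classical
open Finset

theorem stmt16 {k p ℓ : ℕ} (hk : 3 ≤ k) (hp : p.Prime) (hkp : k ≤ p)
    (hl : 0 < ℓ) (F : Type*) [Field F] [Fintype F]
    (hcard : Fintype.card F = p ^ ℓ) :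
    ∃ C : ℝ, 0 < C ∧ ∀ n : ℕ, 1 ≤ n → ∀ A : Finset (Fin n → F),
      (¬ ∃ x : Fin k → (Fin n → F), (∀ i, x i ∈ A) ∧ Function.Injective x ∧
        ∀ i j l : Fin k, i ≠ j → j ≠ l → i ≠ l →
          ∑ s, (x i s - x j s) * (x j s - x l s) = 0) →
      (A.card : ℝ) ≤ C * (n : ℝ) ^ ((k + 1) * (p ^ ℓ - 1)) := by
  classical
  set q := p ^ ℓ with hqdef
  have hp2 : 2 ≤ p := hp.two_le
  have hq2 : 2 ≤ q := le_trans hp2 (Nat.le_self_pow (by omega) p)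
  set D := (k - 1) * (q - 1) with hDdef
  have hqpos : 0 < q := by omega
  have hkpos : 0 < k := by omega
  refine ⟨((q * k * 2 ^ D : ℕ) : ℝ), by positivity, ?_⟩
  intro n hn A hA
  set ip : (Fin n → F) → (Fin n → F) → F := fun u v => ∑ s, u s * v s with hip
  have ipcomm : ∀ u v, ip u v = ip v u := fun u v =>
    Finset.sum_congr rfl (fun s _ => mul_comm _ _)
  have key : ∀ c : F, (A.filter (fun x => ip x x = c)).card ≤ (n + 1) ^ D * (k - 1) := by
    intro c
    set Ac := A.filter (fun x => ip x x = c) with hAcdef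
    have hAcmem : ∀ x ∈ Ac, ip x x = c := fun x hx => (Finset.mem_filter.mp hx).2
    have hclique : ∀ x : Fin n → F, ∃ Cx : Finset (Fin n → F), x ∈ Ac →
        (Cx ⊆ Ac ∧ x ∈ Cx ∧ (∀ y ∈ Cx, ∀ z ∈ Cx, ip y z = c) ∧
         (∀ y ∈ Ac, (∀ z ∈ Cx, ip z y = c) → y ∈ Cx)) := by
      intro x
      by_cases hx : x ∈ Ac
      · obtain ⟨Cx, hCmem, hCmax⟩ := Finset.exists_max_image
          (Ac.powerset.filter (fun C => x ∈ C ∧ ∀ y ∈ C, ∀ z ∈ C, ip y z = c))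
          Finset.card ⟨{x}, by
            simp only [Finset.mem_filter, Finset.mem_powerset]
            refine ⟨by simpa using hx, by simp, ?_⟩
            intro y hy z hz
            simp only [Finset.mem_singleton] at hy hz
            rw [hy, hz]; exact hAcmem x hx⟩
        simp only [Finset.mem_filter, Finset.mem_powerset] at hCmem
        obtain ⟨hCsub, hxC, hpair⟩ := hCmem
        refine ⟨Cx, fun _ => ⟨hCsub, hxC, hpair, ?_⟩⟩
        intro y hy hall
        by_contra hyC
        have hins : insert y Cx ∈ Ac.powerset.filter
            (fun C => x ∈ C ∧ ∀ y ∈ C, ∀ z ∈ C, ip y z = c) := by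
          simp only [Finset.mem_filter, Finset.mem_powerset]
          refine ⟨Finset.insert_subset hy hCsub, Finset.mem_insert_of_mem hxC, ?_⟩
          intro u hu v hv
          rcases Finset.mem_insert.mp hu with h1 | h1
          · rcases Finset.mem_insert.mp hv with h2 | h2
            · rw [h1, h2]; exact hAcmem y hy
            · rw [h1, ipcomm]; exact hall v h2
          · rcases Finset.mem_insert.mp hv with h2 | h2
            · rw [h2]; exact hall u h1
            · exact hpair u h1 v h2
        have hle := hCmax _ hins
        rw [Finset.card_insert_of_notMem hyC] at hle
        omega
      · exact ⟨∅, fun h => absurd h hx⟩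
    choose Cf hCf using hclique
    have hsize : ∀ x ∈ Ac, (Cf x).card ≤ k - 1 := by
      intro x hx
      by_contra hbig
      push_neg at hbig
      have hk' : k ≤ (Cf x).card := by omega
      obtain ⟨B, hBsub, hBcard⟩ := Finset.exists_subset_card_eq hk'
      obtain ⟨hCsub, hxC, hpair, -⟩ := hCf x hx
      apply hA
      set xf : Fin k → (Fin n → F) := fun i => (B.equivFin.symm (Fin.cast hBcard.symm i) : Fin n → F) with hxf
      have hxfB : ∀ i, xf i ∈ B := fun i => (B.equivFin.symm (Fin.cast hBcard.symm i)).2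
      refine ⟨xf, ?_, ?_, ?_⟩
      · intro i
        exact (Finset.mem_filter.mp (hCsub (hBsub (hxfB i)))).1
      · intro i j hij
        have h1 := B.equivFin.symm.injective (Subtype.ext hij)
        exact Fin.cast_injective _ h1
      · intro i j l hij hjl hil
        have hval : ∀ a b : Fin k, ip (xf a) (xf b) = c := fun a b =>
          hpair _ (hBsub (hxfB a)) _ (hBsub (hxfB b))
        have expand : ∀ s : Fin n, (xf i s - xf j s) * (xf j s - xf l s)
            = xf i s * xf j s - xf i s * xf l s - xf j s * xf j s + xf j s * xf l s := by
          intro s; ring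
        rw [Finset.sum_congr rfl (fun s _ => expand s)]
        rw [Finset.sum_add_distrib, Finset.sum_sub_distrib, Finset.sum_sub_distrib]
        have e1 := hval i j; have e2 := hval i l; have e3 := hval j j; have e4 := hval j l
        simp only [hip] at e1 e2 e3 e4
        rw [e1, e2, e3, e4]; ring
    set g : (Fin n → F) → (Fin n → F) → F :=
      fun x y => ∏ z ∈ Cf x, (1 - ((∑ s, z s * y s) - c) ^ (q - 1)) with hg
    have hgone : ∀ x ∈ Ac, ∀ y ∈ Cf x, g x y = 1 := by
      intro x hx y hy
      obtain ⟨hCsub, hxC, hpair, -⟩ := hCf x hx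
      apply Finset.prod_eq_one
      intro z hz
      have hz2 : ip z y = c := hpair z hz y hy
      simp only [hip] at hz2
      rw [hz2]
      rw [sub_self, zero_pow (by omega), sub_zero]
    have hgzero : ∀ x ∈ Ac, ∀ y ∈ Ac, y ∉ Cf x → g x y = 0 := by
      intro x hx y hy hyC
      obtain ⟨-, -, -, hmax⟩ := hCf x hx
      have hex : ∃ z ∈ Cf x, ip z y ≠ c := by
        by_contra h; push_neg at h; exact hyC (hmax y hy h)
      obtain ⟨z, hz, hne⟩ := hex
      apply Finset.prod_eq_zero hz
      have h1 : ((∑ s, z s * y s) - c) ≠ 0 := sub_ne_zero.mpr hne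
      have h2 := FiniteField.pow_card_sub_one_eq_one _ h1
      rw [hcard] at h2
      rw [h2, sub_self]
    have hgmem : ∀ x ∈ Ac, g x ∈ MonSpan F n D := by
      intro x hx
      have h1 := prod_mem_monSpan (Cf x) c (q - 1)
      refine monSpan_mono ?_ h1
      exact Nat.mul_le_mul_right _ (hsize x hx)
    obtain ⟨b, hbS, hspan, hbind⟩ := exists_linearIndependent F (g '' (Ac : Set (Fin n → F)))
    have hSfin : (g '' (Ac : Set (Fin n → F))).Finite := Ac.finite_toSet.image g
    have hbfin : b.Finite := hSfin.subset hbS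
    have hbsub : b ⊆ (MonSpan F n D : Set ((Fin n → F) → F)) := by
      intro f hf
      obtain ⟨x, hx, rfl⟩ := hbS hf
      exact hgmem x (Finset.mem_coe.mp hx)
    have hbcard := card_bound_monSpan hbfin hbsub hbind
    have hcover : Ac ⊆ hbfin.toFinset.biUnion (fun f => Ac.filter (fun y => f y ≠ 0)) := by
      intro y hy
      have hgy : g y ∈ Submodule.span F b := by
        rw [hspan]; exact Submodule.subset_span ⟨y, Finset.mem_coe.mpr hy, rfl⟩
      have h1 : ∃ f ∈ b, f y ≠ 0 := by
        by_contra h; push_neg at h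
        have hker : Submodule.span F b ≤
            LinearMap.ker (LinearMap.proj (R := F) (φ := fun _ : (Fin n → F) => F) y) := by
          rw [Submodule.span_le]
          intro f hf
          simpa [LinearMap.mem_ker] using h f hf
        have h2 := hker hgy
        simp only [LinearMap.mem_ker, LinearMap.proj_apply] at h2
        have hone := hgone y hy y (hCf y hy).2.1
        rw [hone] at h2
        exact one_ne_zero h2
      obtain ⟨f, hf, hfy⟩ := h1
      exact Finset.mem_biUnion.mpr ⟨f, hbfin.mem_toFinset.mpr hf, Finset.mem_filter.mpr ⟨hy, hfy⟩⟩
    have hfilter : ∀ f ∈ hbfin.toFinset, (Ac.filter (fun y => f y ≠ 0)).card ≤ k - 1 := by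
      intro f hf
      obtain ⟨x, hx, rfl⟩ := hbS (hbfin.mem_toFinset.mp hf)
      have hx' : x ∈ Ac := Finset.mem_coe.mp hx
      have hsub2 : Ac.filter (fun y => g x y ≠ 0) ⊆ Cf x := by
        intro y hy
        obtain ⟨hy1, hy2⟩ := Finset.mem_filter.mp hy
        by_contra hyC
        exact hy2 (hgzero x hx' y hy1 hyC)
      exact (Finset.card_le_card hsub2).trans (hsize x hx')
    calc Ac.card ≤ (hbfin.toFinset.biUnion (fun f => Ac.filter (fun y => f y ≠ 0))).card :=
          Finset.card_le_card hcover
      _ ≤ ∑ f ∈ hbfin.toFinset, (Ac.filter (fun y => f y ≠ 0)).card := Finset.card_biUnion_le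
      _ ≤ hbfin.toFinset.card * (k - 1) := by
          have := Finset.sum_le_card_nsmul hbfin.toFinset _ (k - 1) hfilter
          simpa [smul_eq_mul] using this
      _ ≤ (n + 1) ^ D * (k - 1) := Nat.mul_le_mul_right _ hbcard
  have htot : A.card = ∑ c : F, (A.filter (fun x => ip x x = c)).card :=
    Finset.card_eq_sum_card_fiberwise (fun x _ => Finset.mem_univ _)
  have htot2 : A.card ≤ q * ((n + 1) ^ D * (k - 1)) := by
    rw [htot]
    calc ∑ c : F, (A.filter (fun x => ip x x = c)).card
        ≤ Finset.univ.card * ((n + 1) ^ D * (k - 1)) := by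
          have := Finset.sum_le_card_nsmul Finset.univ _ ((n + 1) ^ D * (k - 1))
            (fun c _ => key c)
          simpa [smul_eq_mul] using this
      _ = q * ((n + 1) ^ D * (k - 1)) := by rw [Finset.card_univ, hcard]
  have hnat : q * ((n + 1) ^ D * (k - 1)) ≤ (q * k * 2 ^ D) * n ^ ((k + 1) * (q - 1)) := by
    have h1 : (n + 1) ^ D ≤ 2 ^ D * n ^ D := by
      calc (n + 1) ^ D ≤ (2 * n) ^ D := Nat.pow_le_pow_left (by omega) D
        _ = 2 ^ D * n ^ D := Nat.mul_pow 2 n D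
    have h2 : n ^ D ≤ n ^ ((k + 1) * (q - 1)) :=
      Nat.pow_le_pow_right (by omega) (Nat.mul_le_mul_right _ (by omega))
    calc q * ((n + 1) ^ D * (k - 1))
        ≤ q * ((2 ^ D * n ^ ((k + 1) * (q - 1))) * k) := by
          refine Nat.mul_le_mul_left _ (Nat.mul_le_mul ?_ (by omega))
          exact h1.trans (Nat.mul_le_mul_left _ h2)
      _ = (q * k * 2 ^ D) * n ^ ((k + 1) * (q - 1)) := by ring
  calc (A.card : ℝ) ≤ ((q * ((n + 1) ^ D * (k - 1)) : ℕ) : ℝ) := Nat.cast_le.mpr htot2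
    _ ≤ (((q * k * 2 ^ D) * n ^ ((k + 1) * (q - 1)) : ℕ) : ℝ) := Nat.cast_le.mpr hnat
    _ = ((q * k * 2 ^ D : ℕ) : ℝ) * (n : ℝ) ^ ((k + 1) * (q - 1)) := by push_cast; ring
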